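/- Assume the exponential ergodicity bound max_{i,j}|(P₀^n)_{ij} - π_{0,j}| ≤ Cλ^n (n ≥ 1) with λ ∈ [0,1), and the geometric-resolvent bound |π_{ε,j} - π_{0,j}| ≤ ε(|d_j - π_{0,j}| + Cλ/(1-λ)). Then for any sequence ε ↦ n_ε with n_ε → ∞ as ε → 0+, and any initial distribution p̄ and state k, one has p_{ε,p̄,k}(n_ε) → π_{0,k} as ε → 0+, where p_{ε,p̄,k}(n) = ∑_i p_i ((1-ε)P₀ + εD)^n_{ik}. -/

import Mathlib

open Finset Matrix Filter


private lemma rowsum_mul' {m : ℕ} {A B : Matrix (Fin m) (Fin m) ℝ}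
    (hA : ∀ i, ∑ j, A i j = 1) (hB : ∀ i, ∑ j, B i j = 1) (i : Fin m) :
    ∑ j, (A * B) i j = 1 := by
  simp only [Matrix.mul_apply]
  rw [Finset.sum_comm]
  simp [← Finset.mul_sum, hB, hA i]

private lemma mul_rankone' {m : ℕ} {A D : Matrix (Fin m) (Fin m) ℝ} {d : Fin m → ℝ}
    (hD : ∀ i j, D i j = d j) (hA : ∀ i, ∑ j, A i j = 1) : A * D = D := by
  ext i j
  simp [Matrix.mul_apply, hD, ← Finset.sum_mul, hA i]

private lemma rowsum_pow' {m : ℕ} {A : Matrix (Fin m) (Fin m) ℝ}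
    (hA : ∀ i, ∑ j, A i j = 1) (N : ℕ) : ∀ i, ∑ j, (A ^ N) i j = 1 := by
  induction N with
  | zero => intro i; simp [Matrix.one_apply]
  | succ N ih => intro i; rw [pow_succ]; exact rowsum_mul' ih hA i

private lemma key' {m : ℕ} (P₀ D : Matrix (Fin m) (Fin m) ℝ) (d : Fin m → ℝ)
    (hD : ∀ i j, D i j = d j) (hP₀row : ∀ i, ∑ j, P₀ i j = 1)
    (hdsum : ∑ j, d j = 1) (ε : ℝ) (N : ℕ) :
    ((1 - ε) • P₀ + ε • D) ^ N
      = (1 - ε) ^ N • P₀ ^ N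
        + ∑ l ∈ Finset.range N, (ε * (1 - ε) ^ l) • (D * P₀ ^ l) := by
  induction N with
  | zero => simp
  | succ N ih =>
    have hrowPε : ∀ i, ∑ j, ((1 - ε) • P₀ + ε • D) i j = 1 := by
      intro i
      simp [Finset.sum_add_distrib, ← Finset.mul_sum, hP₀row, hD, hdsum]
    have hpowD : ((1 - ε) • P₀ + ε • D) ^ N * D = D :=
      mul_rankone' hD (rowsum_pow' hrowPε N)
    calc ((1 - ε) • P₀ + ε • D) ^ (N + 1)
        = ((1 - ε) • P₀ + ε • D) ^ N * ((1 - ε) • P₀ + ε • D) := pow_succ _ _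
      _ = (1 - ε) • (((1 - ε) • P₀ + ε • D) ^ N * P₀) + ε • D := by
          rw [Matrix.mul_add, Matrix.mul_smul, Matrix.mul_smul, hpowD]
      _ = (1 - ε) ^ (N + 1) • P₀ ^ (N + 1)
          + (∑ l ∈ Finset.range N, (ε * (1 - ε) ^ (l + 1)) • (D * P₀ ^ (l + 1)) + ε • D) := by
          rw [ih, Matrix.add_mul, Finset.sum_mul, smul_add, Finset.smul_sum, add_assoc]
          congr 1
          · rw [Matrix.smul_mul, smul_smul, ← pow_succ', ← pow_succ]
          congr 1
          apply Finset.sum_congr rfl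
          intro l _
          rw [Matrix.smul_mul, Matrix.mul_assoc, ← pow_succ, smul_smul]
          congr 1
          ring
      _ = (1 - ε) ^ (N + 1) • P₀ ^ (N + 1)
          + ∑ l ∈ Finset.range (N + 1), (ε * (1 - ε) ^ l) • (D * P₀ ^ l) := by
          rw [Finset.sum_range_succ']
          simp

private lemma bnd' {m : ℕ} (P₀ D : Matrix (Fin m) (Fin m) ℝ) (d : Fin m → ℝ)
    (hP₀row : ∀ i, ∑ j, P₀ i j = 1)
    (hdnonneg : ∀ j, 0 ≤ d j) (hdsum : ∑ j, d j = 1)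
    (hD : ∀ i j, D i j = d j)
    (C lam : ℝ) (hC : 0 ≤ C) (hlam : lam ∈ Set.Ico (0 : ℝ) 1)
    (π₀ : Fin m → ℝ) (hπ₀nonneg : ∀ j, 0 ≤ π₀ j) (hπ₀sum : ∑ j, π₀ j = 1)
    (hbound : ∀ n : ℕ, 1 ≤ n → ∀ i j, |(P₀ ^ n) i j - π₀ j| ≤ C * lam ^ n)
    (p : Fin m → ℝ) (hpnonneg : ∀ i, 0 ≤ p i) (hpsum : ∑ i, p i = 1)
    (k : Fin m) (ε : ℝ) (hε0 : 0 < ε) (hε1 : ε ≤ 1) (N : ℕ) (hN : 1 ≤ N) :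
    |(∑ i, p i * (((1 - ε) • P₀ + ε • D) ^ N) i k) - π₀ k|
      ≤ C * lam ^ N + ε * (1 + C * lam / (1 - lam)) := by
  obtain ⟨hlam0, hlam1⟩ := hlam
  have h1ε0 : (0:ℝ) ≤ 1 - ε := by linarith
  have h1ε1 : 1 - ε ≤ 1 := by linarith
  -- entrywise expansion
  have entry : ∀ i, (((1 - ε) • P₀ + ε • D) ^ N) i k
      = (1 - ε) ^ N * (P₀ ^ N) i k
        + ∑ l ∈ Finset.range N, ε * (1 - ε) ^ l * (D * P₀ ^ l) i k := by
    intro i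
    rw [key' P₀ D d hD hP₀row hdsum ε N]
    simp [Matrix.add_apply, Matrix.smul_apply, Matrix.sum_apply, smul_eq_mul]
  have sum1 : (1 - ε) ^ N + ∑ l ∈ Finset.range N, ε * (1 - ε) ^ l = 1 := by
    have hne : (1:ℝ) - ε ≠ 1 := by intro h; nlinarith
    rw [← Finset.mul_sum]
    linear_combination -(geom_sum_mul (1 - ε) N)
  -- per-entry deviation expansion
  have expand : ∀ i, (((1 - ε) • P₀ + ε • D) ^ N) i k - π₀ k
      = (1 - ε) ^ N * ((P₀ ^ N) i k - π₀ k)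
        + ∑ l ∈ Finset.range N, ε * (1 - ε) ^ l * ((D * P₀ ^ l) i k - π₀ k) := by
    intro i
    have e2 : ∑ l ∈ Finset.range N, ε * (1 - ε) ^ l * ((D * P₀ ^ l) i k - π₀ k)
        = (∑ l ∈ Finset.range N, ε * (1 - ε) ^ l * (D * P₀ ^ l) i k)
          - (∑ l ∈ Finset.range N, ε * (1 - ε) ^ l) * π₀ k := by
      rw [Finset.sum_mul, ← Finset.sum_sub_distrib]
      exact Finset.sum_congr rfl (fun l _ => by ring)
    rw [entry i, e2]
    linear_combination π₀ k * sum1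
  -- bounds on the deviation pieces
  have hQ : ∀ l : ℕ, 1 ≤ l → ∀ i : Fin m, |(D * P₀ ^ l) i k - π₀ k| ≤ C * lam ^ l := by
    intro l hl i
    have : (D * P₀ ^ l) i k - π₀ k = ∑ j, d j * ((P₀ ^ l) j k - π₀ k) := by
      simp [Matrix.mul_apply, hD, mul_sub, Finset.sum_sub_distrib, ← Finset.sum_mul, hdsum]
    rw [this]
    calc |∑ j, d j * ((P₀ ^ l) j k - π₀ k)| ≤ ∑ j, |d j * ((P₀ ^ l) j k - π₀ k)| :=
          Finset.abs_sum_le_sum_abs _ _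
      _ ≤ ∑ j, d j * (C * lam ^ l) := by
          apply Finset.sum_le_sum
          intro j _
          rw [abs_mul, abs_of_nonneg (hdnonneg j)]
          exact mul_le_mul_of_nonneg_left (hbound l hl j k) (hdnonneg j)
      _ = C * lam ^ l := by rw [← Finset.sum_mul, hdsum, one_mul]
  have hQ0 : ∀ i : Fin m, |(D * P₀ ^ 0) i k - π₀ k| ≤ 1 := by
    intro i
    have hdk : d k ≤ 1 := by
      have := Finset.single_le_sum (f := d) (fun j _ => hdnonneg j) (Finset.mem_univ k)
      linarith [hdsum ▸ this]
    have hπk : π₀ k ≤ 1 := by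
      have := Finset.single_le_sum (f := π₀) (fun j _ => hπ₀nonneg j) (Finset.mem_univ k)
      linarith [hπ₀sum ▸ this]
    have : (D * P₀ ^ 0) i k = d k := by simp [hD]
    rw [this, abs_sub_le_iff]
    constructor <;> [linarith [hπ₀nonneg k]; linarith [hdnonneg k]]
  -- bound the geometric sum part
  obtain ⟨M, rfl⟩ : ∃ M, N = M + 1 := ⟨N - 1, (Nat.succ_pred_eq_of_pos hN).symm⟩
  have hsumbd : ∀ i : Fin m,
      ∑ l ∈ Finset.range (M + 1), ε * (1 - ε) ^ l * |(D * P₀ ^ l) i k - π₀ k|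
        ≤ ε * (1 + C * lam / (1 - lam)) := by
    intro i
    rw [Finset.sum_range_succ']
    have t0 : ε * (1 - ε) ^ 0 * |(D * P₀ ^ 0) i k - π₀ k| ≤ ε * 1 := by
      simpa using mul_le_mul_of_nonneg_left (hQ0 i) hε0.le
    have tl : ∀ l ∈ Finset.range M,
        ε * (1 - ε) ^ (l + 1) * |(D * P₀ ^ (l + 1)) i k - π₀ k| ≤ ε * (C * lam ^ (l + 1)) := by
      intro l _
      have h1 : (1 - ε) ^ (l + 1) ≤ 1 := pow_le_one₀ h1ε0 h1ε1
      have h2 : |(D * P₀ ^ (l + 1)) i k - π₀ k| ≤ C * lam ^ (l + 1) :=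
        hQ (l + 1) (Nat.succ_le_succ (Nat.zero_le l)) i
      calc ε * (1 - ε) ^ (l + 1) * |(D * P₀ ^ (l + 1)) i k - π₀ k|
          ≤ ε * (1 - ε) ^ (l + 1) * (C * lam ^ (l + 1)) := by
            apply mul_le_mul_of_nonneg_left h2
            positivity
        _ ≤ ε * 1 * (C * lam ^ (l + 1)) := by
            apply mul_le_mul_of_nonneg_right _ (by positivity)
            exact mul_le_mul_of_nonneg_left h1 hε0.le
        _ = ε * (C * lam ^ (l + 1)) := by ring
    have geo : ∑ l ∈ Finset.range M, ε * (C * lam ^ (l + 1)) ≤ ε * (C * lam / (1 - lam)) := by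
      have hg : ∑ l ∈ Finset.range M, lam ^ l ≤ 1 / (1 - lam) := by
        rw [le_div_iff₀ (by linarith : (0:ℝ) < 1 - lam)]
        nlinarith [geom_sum_mul lam M, pow_nonneg hlam0 M]
      calc ∑ l ∈ Finset.range M, ε * (C * lam ^ (l + 1))
          = ε * C * lam * ∑ l ∈ Finset.range M, lam ^ l := by
            rw [Finset.mul_sum]; exact Finset.sum_congr rfl (fun l _ => by ring)
        _ ≤ ε * C * lam * (1 / (1 - lam)) := by
            apply mul_le_mul_of_nonneg_left hg
            positivity
        _ = ε * (C * lam / (1 - lam)) := by ring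
    calc (∑ l ∈ Finset.range M, ε * (1 - ε) ^ (l + 1) * |(D * P₀ ^ (l + 1)) i k - π₀ k|)
          + ε * (1 - ε) ^ 0 * |(D * P₀ ^ 0) i k - π₀ k|
        ≤ (∑ l ∈ Finset.range M, ε * (C * lam ^ (l + 1))) + ε * 1 :=
          add_le_add (Finset.sum_le_sum tl) t0
      _ ≤ ε * (C * lam / (1 - lam)) + ε * 1 := add_le_add geo le_rfl
      _ = ε * (1 + C * lam / (1 - lam)) := by ring
  -- per-entry full bound
  have hentrybd : ∀ i : Fin m, |(((1 - ε) • P₀ + ε • D) ^ (M + 1)) i k - π₀ k|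
      ≤ C * lam ^ (M + 1) + ε * (1 + C * lam / (1 - lam)) := by
    intro i
    rw [expand i]
    calc |(1 - ε) ^ (M + 1) * ((P₀ ^ (M + 1)) i k - π₀ k)
          + ∑ l ∈ Finset.range (M + 1), ε * (1 - ε) ^ l * ((D * P₀ ^ l) i k - π₀ k)|
        ≤ |(1 - ε) ^ (M + 1) * ((P₀ ^ (M + 1)) i k - π₀ k)|
          + |∑ l ∈ Finset.range (M + 1), ε * (1 - ε) ^ l * ((D * P₀ ^ l) i k - π₀ k)| :=
          abs_add_le _ _
      _ ≤ C * lam ^ (M + 1) + ε * (1 + C * lam / (1 - lam)) := by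
          apply add_le_add
          · rw [abs_mul, abs_of_nonneg (pow_nonneg h1ε0 _)]
            calc (1 - ε) ^ (M + 1) * |(P₀ ^ (M + 1)) i k - π₀ k|
                ≤ 1 * (C * lam ^ (M + 1)) := by
                  apply mul_le_mul (pow_le_one₀ h1ε0 h1ε1)
                    (hbound (M + 1) (Nat.succ_le_succ (Nat.zero_le M)) i k)
                    (abs_nonneg _) zero_le_one
              _ = C * lam ^ (M + 1) := one_mul _
          · calc |∑ l ∈ Finset.range (M + 1), ε * (1 - ε) ^ l * ((D * P₀ ^ l) i k - π₀ k)|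
                ≤ ∑ l ∈ Finset.range (M + 1), |ε * (1 - ε) ^ l * ((D * P₀ ^ l) i k - π₀ k)| :=
                  Finset.abs_sum_le_sum_abs _ _
              _ = ∑ l ∈ Finset.range (M + 1), ε * (1 - ε) ^ l * |(D * P₀ ^ l) i k - π₀ k| := by
                  apply Finset.sum_congr rfl
                  intro l _
                  rw [abs_mul, abs_of_nonneg (by positivity : (0:ℝ) ≤ ε * (1 - ε) ^ l)]
              _ ≤ ε * (1 + C * lam / (1 - lam)) := hsumbd i
  -- combine over initial distribution
  have : (∑ i, p i * (((1 - ε) • P₀ + ε • D) ^ (M + 1)) i k) - π₀ k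
      = ∑ i, p i * ((((1 - ε) • P₀ + ε • D) ^ (M + 1)) i k - π₀ k) := by
    simp [mul_sub, Finset.sum_sub_distrib, ← Finset.sum_mul, hpsum]
  rw [this]
  calc |∑ i, p i * ((((1 - ε) • P₀ + ε • D) ^ (M + 1)) i k - π₀ k)|
      ≤ ∑ i, |p i * ((((1 - ε) • P₀ + ε • D) ^ (M + 1)) i k - π₀ k)| :=
        Finset.abs_sum_le_sum_abs _ _
    _ ≤ ∑ i, p i * (C * lam ^ (M + 1) + ε * (1 + C * lam / (1 - lam))) := by
        apply Finset.sum_le_sum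
        intro i _
        rw [abs_mul, abs_of_nonneg (hpnonneg i)]
        exact mul_le_mul_of_nonneg_left (hentrybd i) (hpnonneg i)
    _ = C * lam ^ (M + 1) + ε * (1 + C * lam / (1 - lam)) := by
        rw [← Finset.sum_mul, hpsum, one_mul]

/-- triangular-array ergodic theorem in the regular case. Assume the
exponential ergodicity bound `max_{i,j} |(P₀^n)_{ij} - π_{0,j}| ≤ C λ^n` (`n ≥ 1`, `λ ∈ [0,1)`)
and, for the stationary distributions `π_ε` of `P_ε = (1-ε) P₀ + ε D` (`ε ∈ (0,1]`), the bound
`|π_{ε,j} - π_{0,j}| ≤ ε (|d_j - π_{0,j}| + Cλ/(1-λ))`. Then for any `ε ↦ n_ε` with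
`n_ε → ∞` as `ε → 0+`, any initial distribution `p̄` and any state `k`,
`p_{ε,p̄,k}(n_ε) → π_{0,k}` as `ε → 0+`. -/
theorem stmt14 {m : ℕ} (P₀ D : Matrix (Fin m) (Fin m) ℝ) (d : Fin m → ℝ)
    (hP₀nonneg : ∀ i j, 0 ≤ P₀ i j) (hP₀row : ∀ i, ∑ j, P₀ i j = 1)
    (hdnonneg : ∀ j, 0 ≤ d j) (hdsum : ∑ j, d j = 1)
    (hD : ∀ i j, D i j = d j)
    (C lam : ℝ) (hC : 0 ≤ C) (hlam : lam ∈ Set.Ico (0 : ℝ) 1)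
    (π₀ : Fin m → ℝ) (hπ₀nonneg : ∀ j, 0 ≤ π₀ j) (hπ₀sum : ∑ j, π₀ j = 1)
    (hbound : ∀ n : ℕ, 1 ≤ n → ∀ i j, |(P₀ ^ n) i j - π₀ j| ≤ C * lam ^ n)
    (πe : ℝ → Fin m → ℝ)
    (hπe : ∀ ε ∈ Set.Ioc (0 : ℝ) 1,
      (∀ j, 0 ≤ πe ε j) ∧ (∑ j, πe ε j = 1) ∧
      (∀ j, ∑ i, πe ε i * ((1 - ε) • P₀ + ε • D) i j = πe ε j))
    (hπebound : ∀ ε ∈ Set.Ioc (0 : ℝ) 1, ∀ j,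
      |πe ε j - π₀ j| ≤ ε * (|d j - π₀ j| + C * lam / (1 - lam)))
    (n : ℝ → ℕ) (hn : Tendsto n (nhdsWithin 0 (Set.Ioi 0)) atTop)
    (p : Fin m → ℝ) (hpnonneg : ∀ i, 0 ≤ p i) (hpsum : ∑ i, p i = 1)
    (k : Fin m) :
    Tendsto (fun ε : ℝ => ∑ i, p i * (((1 - ε) • P₀ + ε • D) ^ (n ε)) i k)
      (nhdsWithin 0 (Set.Ioi 0)) (nhds (π₀ k)) := by
  set F := nhdsWithin (0:ℝ) (Set.Ioi 0) with hF
  set B : ℝ := 1 + C * lam / (1 - lam) with hBdef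
  set f : ℝ → ℝ := fun ε => ∑ i, p i * (((1 - ε) • P₀ + ε • D) ^ (n ε)) i k with hf
  have hev : ∀ᶠ ε in F, |f ε - π₀ k| ≤ C * lam ^ (n ε) + ε * B := by
    have h1 : ∀ᶠ ε in F, ε ∈ Set.Ioi (0:ℝ) := self_mem_nhdsWithin
    have h2 : ∀ᶠ ε in F, ε < 1 :=
      eventually_nhdsWithin_of_eventually_nhds (eventually_lt_nhds (by norm_num))
    have h3 : ∀ᶠ ε in F, 1 ≤ n ε := hn.eventually (eventually_ge_atTop 1)
    filter_upwards [h1, h2, h3] with ε hε1 hε2 hε3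
    exact bnd' P₀ D d hP₀row hdnonneg hdsum hD C lam hC hlam π₀ hπ₀nonneg hπ₀sum hbound
      p hpnonneg hpsum k ε hε1 hε2.le (n ε) hε3
  have hg : Tendsto (fun ε => C * lam ^ (n ε) + ε * B) F (nhds 0) := by
    have ha : Tendsto (fun ε => lam ^ (n ε)) F (nhds 0) :=
      (tendsto_pow_atTop_nhds_zero_of_lt_one hlam.1 hlam.2).comp hn
    have hb : Tendsto (fun ε : ℝ => ε) F (nhds 0) := tendsto_id.mono_right nhdsWithin_le_nhds
    simpa using (ha.const_mul C).add (hb.mul_const B)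
  have habs : Tendsto (fun ε => |f ε - π₀ k|) F (nhds 0) :=
    squeeze_zero' (Eventually.of_forall fun ε => abs_nonneg _) hev hg
  rw [tendsto_iff_dist_tendsto_zero]
  simpa [Real.dist_eq] using habs
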